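/- Let γ₁ and γ₂ be finite loops in a directed graph with integer-weighted edges, both starting and ending at the same vertex α. If r is a rational number with W(γ₁)/L(γ₁) ≤ r ≤ W(γ₂)/L(γ₂) (where W denotes the sum of edge weights along a path and L its length), then there exists a loop γ starting at α with W(γ)/L(γ) = r. -/

import Mathlib

lemma loop_concat {V : Type*} (Adj : V → V → Prop) (W : V → V → ℤ) (α : V)
    (f g : ℕ → V) (n m : ℕ)
    (hf0 : f 0 = α) (hfn : f n = α) (hfa : ∀ i < n, Adj (f i) (f (i + 1)))
    (hg0 : g 0 = α) (hgm : g m = α) (hga : ∀ i < m, Adj (g i) (g (i + 1))) :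
    ∃ h : ℕ → V, h 0 = α ∧ h (n + m) = α ∧ (∀ i < n + m, Adj (h i) (h (i + 1))) ∧
      ∑ i ∈ Finset.range (n + m), W (h i) (h (i + 1)) =
        (∑ i ∈ Finset.range n, W (f i) (f (i + 1)))
        + ∑ i ∈ Finset.range m, W (g i) (g (i + 1)) := by
  refine ⟨fun k => if k < n then f k else g (k - n), ?_, ?_, ?_, ?_⟩
  · by_cases h : 0 < n
    · simp [h, hf0]
    · have hn : n = 0 := by omega
      simp [hn, hg0]
  · have h : ¬ (n + m < n) := by omega
    simp [h, hgm]
  · intro i hi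
    by_cases h1 : i < n
    · by_cases h2 : i + 1 < n
      · simpa [h1, h2] using hfa i h1
      · have h3 : i + 1 = n := by omega
        have : g (i + 1 - n) = f (i + 1) := by rw [h3]; simp [hfn, hg0]
        simp only [h1, if_pos, h2, if_neg, if_false, this]
        simpa [h1, h2, this] using hfa i h1
    · have h2 : ¬ (i + 1 < n) := by omega
      have e1 : i - n < m := by omega
      have e2 : i + 1 - n = i - n + 1 := by omega
      simpa [h1, h2, e2] using hga (i - n) e1
  · rw [Finset.sum_range_add]
    congr 1
    · apply Finset.sum_congr rfl
      intro i hi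
      simp only [Finset.mem_range] at hi
      by_cases h2 : i + 1 < n
      · simp [hi, h2]
      · have h3 : i + 1 = n := by omega
        have : g (i + 1 - n) = f (i + 1) := by rw [h3]; simp [hfn, hg0]
        simp [hi, h2, this, hg0, h3, hfn]
    · apply Finset.sum_congr rfl
      intro i hi
      have h1 : ¬ (n + i < n) := by omega
      have h2 : ¬ (n + i + 1 < n) := by omega
      have e1 : n + i - n = i := by omega
      have e2 : n + i + 1 - n = i + 1 := by omega
      simp [h1, h2, e1, e2]

lemma loop_repeat {V : Type*} (Adj : V → V → Prop) (W : V → V → ℤ) (α : V)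
    (f : ℕ → V) (n : ℕ)
    (hf0 : f 0 = α) (hfn : f n = α) (hfa : ∀ i < n, Adj (f i) (f (i + 1))) (m : ℕ) :
    ∃ h : ℕ → V, h 0 = α ∧ h (m * n) = α ∧ (∀ i < m * n, Adj (h i) (h (i + 1))) ∧
      ∑ i ∈ Finset.range (m * n), W (h i) (h (i + 1)) =
        m * ∑ i ∈ Finset.range n, W (f i) (f (i + 1)) := by
  induction m with
  | zero => exact ⟨fun _ => α, rfl, rfl, by omega, by simp⟩
  | succ k ih =>
    obtain ⟨h, h0, hk, ha, hs⟩ := ih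
    obtain ⟨h', h'0, h'k, h'a, h's⟩ :=
      loop_concat Adj W α h f (k * n) n h0 hk ha hf0 hfn hfa
    have e : (k + 1) * n = k * n + n := by ring
    refine ⟨h', h'0, by rw [e]; exact h'k, by rw [e]; exact h'a, ?_⟩
    rw [e, h's, hs]; push_cast; ring

theorem loop_rotation_intermediate {V : Type*} (Adj : V → V → Prop) (W : V → V → ℤ)
    (α : V) (f₁ f₂ : ℕ → V) (n₁ n₂ : ℕ) (hn₁ : 0 < n₁) (hn₂ : 0 < n₂)
    (hf₁0 : f₁ 0 = α) (hf₁n : f₁ n₁ = α) (hf₁adj : ∀ i < n₁, Adj (f₁ i) (f₁ (i + 1)))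
    (hf₂0 : f₂ 0 = α) (hf₂n : f₂ n₂ = α) (hf₂adj : ∀ i < n₂, Adj (f₂ i) (f₂ (i + 1)))
    (r : ℚ)
    (hr₁ : ((∑ i ∈ Finset.range n₁, W (f₁ i) (f₁ (i + 1)) : ℤ) : ℚ) / (n₁ : ℚ) ≤ r)
    (hr₂ : r ≤ ((∑ i ∈ Finset.range n₂, W (f₂ i) (f₂ (i + 1)) : ℤ) : ℚ) / (n₂ : ℚ)) :
    ∃ (f : ℕ → V) (n : ℕ), 0 < n ∧ f 0 = α ∧ f n = α ∧
      (∀ i < n, Adj (f i) (f (i + 1))) ∧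
      ((∑ i ∈ Finset.range n, W (f i) (f (i + 1)) : ℤ) : ℚ) / (n : ℚ) = r := by
  set S₁ : ℤ := ∑ i ∈ Finset.range n₁, W (f₁ i) (f₁ (i + 1)) with hS₁
  set S₂ : ℤ := ∑ i ∈ Finset.range n₂, W (f₂ i) (f₂ (i + 1)) with hS₂
  set p : ℤ := r.num with hp
  set q : ℤ := (r.den : ℤ) with hq
  have hq0 : (0 : ℤ) < q := by rw [hq]; exact_mod_cast r.pos
  have hrpq : ((p : ℚ)) / (q : ℚ) = r := by
    rw [hp, hq]; push_cast; exact Rat.num_div_den r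
  have hn₁Q : (0 : ℚ) < (n₁ : ℚ) := by exact_mod_cast hn₁
  have hn₂Q : (0 : ℚ) < (n₂ : ℚ) := by exact_mod_cast hn₂
  have hqQ : (0 : ℚ) < (q : ℚ) := by exact_mod_cast hq0
  have hA : S₁ * q - p * n₁ ≤ 0 := by
    have h1 : (S₁ : ℚ) ≤ r * n₁ := (div_le_iff₀ hn₁Q).mp hr₁
    have h2 : (S₁ : ℚ) * q ≤ r * n₁ * q := by
      exact mul_le_mul_of_nonneg_right h1 hqQ.le
    have h3 : r * (n₁ : ℚ) * q = p * n₁ := by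
      rw [← hrpq]; field_simp
    have : (S₁ : ℚ) * q ≤ (p : ℚ) * n₁ := h3 ▸ h2
    have := (by exact_mod_cast this : S₁ * q ≤ p * n₁)
    omega
  have hB : 0 ≤ S₂ * q - p * n₂ := by
    have h1 : r * n₂ ≤ (S₂ : ℚ) := (le_div_iff₀ hn₂Q).mp hr₂
    have h2 : r * n₂ * q ≤ (S₂ : ℚ) * q := mul_le_mul_of_nonneg_right h1 hqQ.le
    have h3 : r * (n₂ : ℚ) * q = p * n₂ := by rw [← hrpq]; field_simp
    have : (p : ℚ) * n₂ ≤ (S₂ : ℚ) * q := h3 ▸ h2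
    have := (by exact_mod_cast this : p * n₂ ≤ S₂ * q)
    omega
  set A : ℤ := S₁ * q - p * n₁ with hAdef
  set B : ℤ := S₂ * q - p * n₂ with hBdef
  set a : ℕ := if A = 0 ∧ B = 0 then 1 else B.toNat with ha
  set b : ℕ := (-A).toNat with hb
  have hab : 0 < a ∨ 0 < b := by
    by_cases h : A = 0 ∧ B = 0
    · left; simp [ha, h]
    · rcases lt_or_eq_of_le hB with h' | h'
      · left; simp [ha, h]; omega
      · right; simp [hb]; omega
  have hkey : (a : ℤ) * A + (b : ℤ) * B = 0 := by
    by_cases h : A = 0 ∧ B = 0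
    · simp [h.1, h.2]
    · have h1 : (a : ℤ) = B := by simp [ha, h]; omega
      have h2 : (b : ℤ) = -A := by simp [hb]; omega
      rw [h1, h2]; ring
  obtain ⟨g₁, g₁0, g₁n, g₁a, g₁s⟩ := loop_repeat Adj W α f₁ n₁ hf₁0 hf₁n hf₁adj a
  obtain ⟨g₂, g₂0, g₂n, g₂a, g₂s⟩ := loop_repeat Adj W α f₂ n₂ hf₂0 hf₂n hf₂adj b
  obtain ⟨h, h0, hN, hadj, hs⟩ :=
    loop_concat Adj W α g₁ g₂ (a * n₁) (b * n₂) g₁0 g₁n g₁a g₂0 g₂n g₂a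
  set N : ℕ := a * n₁ + b * n₂ with hNdef
  have hNpos : 0 < N := by
    rcases hab with h | h
    · have : 0 < a * n₁ := Nat.mul_pos h hn₁
      omega
    · have : 0 < b * n₂ := Nat.mul_pos h hn₂
      omega
  refine ⟨h, N, hNpos, h0, hN, hadj, ?_⟩
  have hT : (∑ i ∈ Finset.range N, W (h i) (h (i + 1))) = a * S₁ + b * S₂ := by
    rw [hNdef, hs, g₁s, g₂s]
  rw [hT]
  have hNQ : (0 : ℚ) < (N : ℚ) := by exact_mod_cast hNpos
  have hkey2 : (a : ℤ) * (S₁ * q - p * ↑n₁) + (b : ℤ) * (S₂ * q - p * ↑n₂) = 0 := by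
    rw [← hAdef, ← hBdef]; exact hkey
  have hmain : ((a : ℤ) * S₁ + (b : ℤ) * S₂) * q = p * ((a : ℤ) * n₁ + (b : ℤ) * n₂) := by
    linear_combination hkey2
  rw [← hrpq, div_eq_div_iff hNQ.ne' hqQ.ne']
  push_cast [hNdef]
  exact_mod_cast hmain
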